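/- arXiv:2012.15726 — 2 statements merged into one kernel-verified Lean document; each statement's English description precedes it below -/
import Mathlib

section
/- Let Z be a d×d positive semidefinite real symmetric matrix with Z ≠ 0, and let φ : ℝ → ℝ be convex. Then trace(φ(Z)) ≤ intdim(Z)·φ(‖Z‖) + (d − intdim(Z))·φ(0), where intdim(Z) = trace(Z)/‖Z‖. -/
open Matrix

/-- Applying a scalar function to a real symmetric matrix through its spectral
decomposition. -/
noncomputable def matFun {d : ℕ} (φ : ℝ → ℝ) (M : Matrix (Fin d) (Fin d) ℝ)
    (hM : M.IsHermitian) : Matrix (Fin d) (Fin d) ℝ :=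
  (hM.eigenvectorUnitary : Matrix (Fin d) (Fin d) ℝ) * diagonal (φ ∘ hM.eigenvalues) *
    star (hM.eigenvectorUnitary : Matrix (Fin d) (Fin d) ℝ)

/-- Largest eigenvalue of a real symmetric matrix (the spectral norm for `Z ⪰ 0`). -/
noncomputable def lamMax {d : ℕ} {M : Matrix (Fin d) (Fin d) ℝ}
    (hM : M.IsHermitian) : ℝ :=
  ⨆ i, hM.eigenvalues i

lemma trace_conj_diagonal {d : ℕ} {Z : Matrix (Fin d) (Fin d) ℝ} (hZ : Z.IsHermitian)
    (f : Fin d → ℝ) :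
    ((hZ.eigenvectorUnitary : Matrix (Fin d) (Fin d) ℝ) * diagonal f *
      star (hZ.eigenvectorUnitary : Matrix (Fin d) (Fin d) ℝ)).trace = ∑ i, f i := by
  rw [trace_mul_cycle]
  have h : (star (hZ.eigenvectorUnitary : Matrix (Fin d) (Fin d) ℝ)) *
      (hZ.eigenvectorUnitary : Matrix (Fin d) (Fin d) ℝ) = 1 := by
    simpa using congrArg Subtype.val (unitary.star_mul_self hZ.eigenvectorUnitary)
  rw [h, one_mul, trace_diagonal]

/-- **Intrinsic dimension bound.** For a nonzero positive semidefinite `Z` and convex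
`φ : ℝ → ℝ`, `trace φ(Z) ≤ intdim(Z)·φ(‖Z‖) + (d − intdim(Z))·φ(0)`, where
`intdim(Z) = trace(Z)/‖Z‖`. -/
theorem intdim_bound {d : ℕ} (Z : Matrix (Fin d) (Fin d) ℝ) (hZ : Z.PosSemidef)
    (hZ0 : Z ≠ 0) (φ : ℝ → ℝ) (hφ : ConvexOn ℝ Set.univ φ) :
    (matFun φ Z hZ.1).trace
      ≤ (Z.trace / lamMax hZ.1) * φ (lamMax hZ.1)
        + ((d : ℝ) - Z.trace / lamMax hZ.1) * φ 0 := by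
  classical
  set lam := hZ.1.eigenvalues with hlam
  -- eigenvalues are nonzero somewhere
  have hne : lam ≠ 0 := by
    intro h
    apply hZ0
    have hst := hZ.1.spectral_theorem
    rw [show (RCLike.ofReal ∘ hZ.1.eigenvalues : Fin d → ℝ) = 0 from h,
      show (0 : Fin d → ℝ) = fun _ => (0:ℝ) from rfl, diagonal_zero, map_zero] at hst
    exact hst
  obtain ⟨i0, hi0⟩ := Function.ne_iff.mp hne
  have hnonneg : ∀ i, 0 ≤ lam i := fun i => hZ.eigenvalues_nonneg i
  have hdpos : 0 < d := by
    rcases Nat.eq_zero_or_pos d with h | h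
    · subst h
      exact absurd (by ext i j; exact i.elim0) hZ0
    · exact h
  haveI : Nonempty (Fin d) := ⟨⟨0, hdpos⟩⟩
  have hle : ∀ i, lam i ≤ lamMax hZ.1 := fun i =>
    le_ciSup (Set.Finite.bddAbove (Set.finite_range _)) i
  have hLpos : 0 < lamMax hZ.1 :=
    lt_of_lt_of_le (lt_of_le_of_ne (hnonneg i0) (Ne.symm hi0)) (hle i0)
  set L := lamMax hZ.1 with hL
  -- trace of matFun
  have htr : (matFun φ Z hZ.1).trace = ∑ i, φ (lam i) :=
    trace_conj_diagonal hZ.1 (φ ∘ lam)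
  -- trace of Z
  have htrZ : Z.trace = ∑ i, lam i := by
    conv_lhs => rw [hZ.1.spectral_theorem]
    simpa using trace_conj_diagonal hZ.1 lam
  -- pointwise convexity bound
  have hpt : ∀ i, φ (lam i) ≤ (lam i / L) * φ L + (1 - lam i / L) * φ 0 := by
    intro i
    have ht0 : 0 ≤ lam i / L := div_nonneg (hnonneg i) hLpos.le
    have ht1 : lam i / L ≤ 1 := (div_le_one hLpos).mpr (hle i)
    have key := hφ.2 (Set.mem_univ L) (Set.mem_univ 0) ht0
      (by linarith : (0:ℝ) ≤ 1 - lam i / L) (by ring)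
    simp only [smul_eq_mul, mul_zero, add_zero] at key
    rwa [div_mul_cancel₀ _ hLpos.ne'] at key
  calc (matFun φ Z hZ.1).trace = ∑ i, φ (lam i) := htr
    _ ≤ ∑ i, ((lam i / L) * φ L + (1 - lam i / L) * φ 0) :=
        Finset.sum_le_sum fun i _ => hpt i
    _ = (Z.trace / L) * φ L + ((d : ℝ) - Z.trace / L) * φ 0 := by
        rw [htrZ]
        simp only [Finset.sum_add_distrib, ← Finset.sum_mul, Finset.sum_div,
          Finset.sum_sub_distrib, Finset.sum_const, Finset.card_univ, Fintype.card_fin,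
          nsmul_eq_mul, mul_one]
end

section
/- Let Z be a d×d positive semidefinite real symmetric matrix whose largest eigenvalue ‖Z‖ is strictly greater than its smallest eigenvalue λ_min(Z), and let φ : ℝ → ℝ be convex. Define updim(Z) = trace(Z − λ_min(Z)·I)/(‖Z‖ − λ_min(Z)) and lowdim(Z) = trace(‖Z‖·I − Z)/(‖Z‖ − λ_min(Z)) = d − updim(Z). Then trace(φ(Z)) ≤ updim(Z)·φ(‖Z‖) + lowdim(Z)·φ(λ_min(Z)). -/
open Matrix

/-- Smallest eigenvalue of a real symmetric matrix. -/
noncomputable def lamMin {d : ℕ} {M : Matrix (Fin d) (Fin d) ℝ}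
    (hM : M.IsHermitian) : ℝ := ⨅ i, hM.eigenvalues i

/-- Upper intrinsic dimension `updim(Z) = trace(Z − λ_min·I)/(‖Z‖ − λ_min)`. -/
noncomputable def updim {d : ℕ} {M : Matrix (Fin d) (Fin d) ℝ}
    (hM : M.IsHermitian) : ℝ :=
  (M - lamMin hM • (1 : Matrix (Fin d) (Fin d) ℝ)).trace / (lamMax hM - lamMin hM)

/-- Lower intrinsic dimension `lowdim(Z) = trace(‖Z‖·I − Z)/(‖Z‖ − λ_min) = d − updim(Z)`. -/
noncomputable def lowdim {d : ℕ} {M : Matrix (Fin d) (Fin d) ℝ}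
    (hM : M.IsHermitian) : ℝ :=
  (lamMax hM • (1 : Matrix (Fin d) (Fin d) ℝ) - M).trace / (lamMax hM - lamMin hM)

lemma trace_conj_diag {d : ℕ} (M : Matrix (Fin d) (Fin d) ℝ) (hM : M.IsHermitian) (f : ℝ → ℝ) :
    ((hM.eigenvectorUnitary : Matrix (Fin d) (Fin d) ℝ) * diagonal (f ∘ hM.eigenvalues) *
      star (hM.eigenvectorUnitary : Matrix (Fin d) (Fin d) ℝ)).trace
      = ∑ i, f (hM.eigenvalues i) := by
  rw [trace_mul_cycle, (Matrix.mem_unitaryGroup_iff').mp hM.eigenvectorUnitary.2,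
    one_mul, trace_diagonal]
  rfl

/-- **Refined intrinsic dimension bound.** For positive semidefinite `Z` with
`‖Z‖ > λ_min(Z)` and convex `φ`,
`trace φ(Z) ≤ updim(Z)·φ(‖Z‖) + lowdim(Z)·φ(λ_min(Z))`. -/
theorem refined_intdim_bound {d : ℕ} (Z : Matrix (Fin d) (Fin d) ℝ) (hZ : Z.PosSemidef)
    (hgap : lamMin hZ.1 < lamMax hZ.1) (φ : ℝ → ℝ) (hφ : ConvexOn ℝ Set.univ φ) :
    (matFun φ Z hZ.1).trace
      ≤ updim hZ.1 * φ (lamMax hZ.1) + lowdim hZ.1 * φ (lamMin hZ.1) := by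
  haveI : Nonempty (Fin d) := by
    by_contra h
    rw [not_nonempty_iff] at h
    rw [lamMin, lamMax, Real.iInf_of_isEmpty, Real.iSup_of_isEmpty] at hgap
    exact lt_irrefl _ hgap
  set m := lamMin hZ.1 with hm
  set Mx := lamMax hZ.1 with hMx
  have hgap' : (0:ℝ) < Mx - m := sub_pos.mpr hgap
  have hne : Mx - m ≠ 0 := ne_of_gt hgap'
  have hle : ∀ i, hZ.1.eigenvalues i ≤ Mx := fun i =>
    le_ciSup (Set.Finite.bddAbove (Set.finite_range _)) i
  have hge : ∀ i, m ≤ hZ.1.eigenvalues i := fun i =>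
    ciInf_le (Set.Finite.bddBelow (Set.finite_range _)) i
  have key : ∀ i, φ (hZ.1.eigenvalues i)
      ≤ (hZ.1.eigenvalues i - m) / (Mx - m) * φ Mx
        + (Mx - hZ.1.eigenvalues i) / (Mx - m) * φ m := by
    intro i
    set x := hZ.1.eigenvalues i with hx
    have ht : (0:ℝ) ≤ (Mx - x) / (Mx - m) := div_nonneg (sub_nonneg.mpr (hle i)) hgap'.le
    have hs : (0:ℝ) ≤ (x - m) / (Mx - m) := div_nonneg (sub_nonneg.mpr (hge i)) hgap'.le
    have hts : (Mx - x) / (Mx - m) + (x - m) / (Mx - m) = 1 := by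
      field_simp
      ring
    have := hφ.2 (Set.mem_univ m) (Set.mem_univ Mx) ht hs hts
    have hcomb : ((Mx - x) / (Mx - m)) • m + ((x - m) / (Mx - m)) • Mx = x := by
      simp only [smul_eq_mul]
      rw [div_mul_eq_mul_div, div_mul_eq_mul_div, ← add_div, div_eq_iff hne]
      ring
    rw [hcomb] at this
    simpa [smul_eq_mul, add_comm] using this
  have htrφ : (matFun φ Z hZ.1).trace = ∑ i, φ (hZ.1.eigenvalues i) :=
    trace_conj_diag Z hZ.1 φ
  have htrZ : Z.trace = ∑ i, hZ.1.eigenvalues i := by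
    nth_rewrite 1 [hZ.1.spectral_theorem]
    have := trace_conj_diag Z hZ.1 id
    simpa using this
  have hsum : ∑ i, φ (hZ.1.eigenvalues i)
      ≤ ∑ i, ((hZ.1.eigenvalues i - m) / (Mx - m) * φ Mx
        + (Mx - hZ.1.eigenvalues i) / (Mx - m) * φ m) :=
    Finset.sum_le_sum fun i _ => key i
  have hup : updim hZ.1 = (∑ i, (hZ.1.eigenvalues i - m)) / (Mx - m) := by
    rw [updim, trace_sub, trace_smul, trace_one, htrZ]
    simp [Finset.sum_sub_distrib, smul_eq_mul, mul_comm]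
    rfl
  have hlo : lowdim hZ.1 = (∑ i, (Mx - hZ.1.eigenvalues i)) / (Mx - m) := by
    rw [lowdim, trace_sub, trace_smul, trace_one, htrZ]
    simp [Finset.sum_sub_distrib, smul_eq_mul, mul_comm]
    rfl
  rw [htrφ, hup, hlo]
  calc ∑ i, φ (hZ.1.eigenvalues i) ≤ _ := hsum
    _ = (∑ i, (hZ.1.eigenvalues i - m)) / (Mx - m) * φ Mx
        + (∑ i, (Mx - hZ.1.eigenvalues i)) / (Mx - m) * φ m := by
      rw [Finset.sum_add_distrib, ← Finset.sum_mul, ← Finset.sum_mul,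
        ← Finset.sum_div, ← Finset.sum_div]
end
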